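/- Every finite simple graph G with minimum degree at least 5 that contains a triangle and is not isomorphic to the complete graph K6 has a (δ≥2, δ≥3)-partition. -/
import Mathlib

open Finset

/-- A `(δ ≥ k₁, δ ≥ k₂)`-partition of a graph `G`: a partition of the vertex set into
two disjoint nonempty sets `V₁, V₂` covering all vertices such that the induced subgraph
`G[Vᵢ]` has minimum degree at least `kᵢ` for `i = 1, 2`. -/
def HasMinDegPartition {V : Type*} (G : SimpleGraph V) (k1 k2 : ℕ) : Prop :=
  ∃ V1 V2 : Set V, V1.Nonempty ∧ V2.Nonempty ∧ Disjoint V1 V2 ∧ V1 ∪ V2 = Set.univ ∧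
    (∀ v ∈ V1, k1 ≤ (V1 ∩ G.neighborSet v).ncard) ∧
    (∀ v ∈ V2, k2 ≤ (V2 ∩ G.neighborSet v).ncard)

section Aux

variable {V : Type*} [Fintype V] [DecidableEq V] (G : SimpleGraph V) [DecidableRel G.Adj]

/-- Twice-edge weight of a finset. -/
def WW (A : Finset V) : ℕ := ∑ v ∈ A, (A ∩ G.neighborFinset v).card

/-- Star property: disjoint nonempty sets with induced min degree ≥ 2 and ≥ 3. -/
def StarProp : Prop :=
  ∃ A S : Set V, A.Nonempty ∧ S.Nonempty ∧ Disjoint A S ∧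
    (∀ v ∈ A, 2 ≤ (A ∩ G.neighborSet v).ncard) ∧
    (∀ v ∈ S, 3 ≤ (S ∩ G.neighborSet v).ncard)

omit [DecidableEq V] in
lemma coe_nbr (v : V) : (↑(G.neighborFinset v) : Set V) = G.neighborSet v := by
  ext u; simp

lemma WW_insert {A : Finset V} {w : V} (hw : w ∉ A) :
    WW G (insert w A) = WW G A + 2 * (A ∩ G.neighborFinset w).card := by
  unfold WW
  rw [Finset.sum_insert hw]
  have h1 : (insert w A ∩ G.neighborFinset w) = A ∩ G.neighborFinset w := by
    apply Finset.insert_inter_of_notMem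
    simp
  have h2 : ∀ v ∈ A, (insert w A ∩ G.neighborFinset v).card
      = (A ∩ G.neighborFinset v).card + (if G.Adj v w then 1 else 0) := by
    intro v hv
    by_cases hadj : G.Adj v w
    · rw [Finset.insert_inter_of_mem (by simpa [SimpleGraph.mem_neighborFinset] using hadj),
        Finset.card_insert_of_notMem (by simp [hw])]
      simp [hadj]
    · rw [Finset.insert_inter_of_notMem (by simpa [SimpleGraph.mem_neighborFinset] using hadj)]
      simp [hadj]
  have h3 : (∑ v ∈ A, if G.Adj v w then 1 else 0) = (A ∩ G.neighborFinset w).card := by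
    have : A ∩ G.neighborFinset w = A.filter (fun v => G.Adj v w) := by
      ext u
      simp [SimpleGraph.mem_neighborFinset, G.adj_comm]
    rw [this, Finset.card_filter]
  rw [h1, Finset.sum_congr rfl h2, Finset.sum_add_distrib, h3]
  ring

lemma WW_univ : WW G univ = ∑ v, G.degree v := by
  unfold WW
  simp only [Finset.univ_inter]
  rfl

/-- If the star property fails, any proper nonempty min-degree-2 finset can be grown. -/
lemma grow (hstar : ¬ StarProp G) (A : Finset V) (hA : A.Nonempty)
    (h2 : ∀ v ∈ A, 2 ≤ (A ∩ G.neighborFinset v).card) (hne : A ≠ univ)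
    (hdeg : ∀ v, 5 ≤ G.degree v) :
    ∃ w, w ∉ A ∧ G.degree w ≤ (A ∩ G.neighborFinset w).card + 2 := by
  by_contra h
  push_neg at h
  apply hstar
  have hcoe : ∀ v : V, ((A : Set V) ∩ G.neighborSet v).ncard = (A ∩ G.neighborFinset v).card := by
    intro v
    rw [show (A : Set V) ∩ G.neighborSet v = ((A ∩ G.neighborFinset v : Finset V) : Set V) by
      rw [Finset.coe_inter, coe_nbr]]
    exact Set.ncard_coe_finset _
  have hcoe2 : ∀ v : V, (((A : Set V)ᶜ) ∩ G.neighborSet v).ncard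
      = ((Aᶜ : Finset V) ∩ G.neighborFinset v).card := by
    intro v
    rw [show ((A : Set V)ᶜ) ∩ G.neighborSet v = (((Aᶜ : Finset V) ∩ G.neighborFinset v : Finset V) : Set V) by
      rw [Finset.coe_inter, coe_nbr, Finset.coe_compl]]
    exact Set.ncard_coe_finset _
  refine ⟨(A : Set V), (A : Set V)ᶜ, by exact_mod_cast hA, ?_, disjoint_compl_right, ?_, ?_⟩
  · have : ∃ w, w ∉ A := by
      by_contra hall
      push_neg at hall
      exact hne (Finset.eq_univ_iff_forall.mpr hall)
    obtain ⟨w, hw⟩ := this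
    exact ⟨w, by simpa using hw⟩
  · intro v hv
    rw [hcoe]
    exact h2 v (by exact_mod_cast hv)
  · intro v hv
    have hvA : v ∉ A := by simpa using hv
    have hlt := h v hvA
    have hsplit : (G.neighborFinset v ∩ A).card + (G.neighborFinset v \ A).card
        = (G.neighborFinset v).card := Finset.card_inter_add_card_sdiff _ _
    have hdv := hdeg v
    rw [hcoe2]
    have he1 : G.neighborFinset v \ A = Aᶜ ∩ G.neighborFinset v := by
      ext u; simp [Finset.mem_sdiff, and_comm]
    have he2 : (G.neighborFinset v ∩ A).card = (A ∩ G.neighborFinset v).card := by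
      rw [Finset.inter_comm]
    have hdeq : (G.neighborFinset v).card = G.degree v := rfl
    rw [← he1]
    omega

/-- Every triangle has an "eating" vertex outside if the star property fails. -/
lemma bad_vertex (hstar : ¬ StarProp G) (hdeg : ∀ v, 5 ≤ G.degree v)
    (hn7 : 7 ≤ Fintype.card V) {p q r : V}
    (hpq : G.Adj p q) (hqr : G.Adj q r) (hrp : G.Adj r p) :
    ∃ w, w ∉ ({p, q, r} : Finset V) ∧ G.degree w = 5 ∧ G.Adj w p ∧ G.Adj w q ∧ G.Adj w r := by
  set A : Finset V := {p, q, r} with hAdef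
  have hpq' : p ≠ q := hpq.ne
  have hqr' : q ≠ r := hqr.ne
  have hrp' : r ≠ p := hrp.ne
  have hcard : A.card = 3 := by
    rw [hAdef]
    rw [Finset.card_insert_of_notMem (by simp [hpq', hrp'.symm]),
      Finset.card_insert_of_notMem (by simp [hqr'])]
    simp
  have hmind : ∀ v ∈ A, 2 ≤ (A ∩ G.neighborFinset v).card := by
    intro v hv
    have hsub : ∀ x y : V, x ≠ y → x ∈ A → y ∈ A → G.Adj v x → G.Adj v y →
        2 ≤ (A ∩ G.neighborFinset v).card := by
      intro x y hxy hxA hyA hvx hvy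
      have : ({x, y} : Finset V) ⊆ A ∩ G.neighborFinset v := by
        intro u hu
        simp only [Finset.mem_insert, Finset.mem_singleton] at hu
        rcases hu with rfl | rfl <;>
          simp [Finset.mem_inter, hxA, hyA, SimpleGraph.mem_neighborFinset, hvx, hvy]
      calc 2 = ({x, y} : Finset V).card := by rw [Finset.card_insert_of_notMem (by simp [hxy]), Finset.card_singleton]
        _ ≤ _ := Finset.card_le_card this
    rw [hAdef] at hv
    simp only [Finset.mem_insert, Finset.mem_singleton] at hv
    rcases hv with rfl | rfl | rfl
    · exact hsub q r hqr' (by simp [hAdef]) (by simp [hAdef]) hpq hrp.symm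
    · exact hsub p r hrp'.symm (by simp [hAdef]) (by simp [hAdef]) hpq.symm hqr
    · exact hsub p q hpq' (by simp [hAdef]) (by simp [hAdef]) hrp hqr.symm
  have hne : A ≠ univ := by
    intro h
    rw [h, Finset.card_univ] at hcard
    omega
  obtain ⟨w, hwA, hwle⟩ := grow G hstar A ⟨p, by simp [hAdef]⟩ hmind hne hdeg
  have hsub : A ∩ G.neighborFinset w ⊆ A := Finset.inter_subset_left
  have hle3 : (A ∩ G.neighborFinset w).card ≤ 3 := hcard ▸ Finset.card_le_card hsub
  have hd5 : G.degree w = 5 := le_antisymm (by omega) (hdeg w)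
  have h3 : (A ∩ G.neighborFinset w).card = 3 := by
    have := hdeg w
    omega
  have heq : A ∩ G.neighborFinset w = A :=
    Finset.eq_of_subset_of_card_le hsub (by omega)
  have hAn : A ⊆ G.neighborFinset w := by
    rw [← heq]; exact Finset.inter_subset_right
  have hadj : ∀ x ∈ A, G.Adj w x := by
    intro x hx
    exact (SimpleGraph.mem_neighborFinset G w x).mp (hAn hx)
  exact ⟨w, hwA, hd5, hadj p (by simp [hAdef]), hadj q (by simp [hAdef]), hadj r (by simp [hAdef])⟩

end Aux

section Aux2

variable {V : Type*} [Fintype V] [DecidableEq V] (G : SimpleGraph V) [DecidableRel G.Adj]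

lemma reach (hdeg : ∀ v, 5 ≤ G.degree v) (hstar : ¬ StarProp G)
    (T : Finset V) (hT3 : T.card = 3)
    (hTmind : ∀ v ∈ T, 2 ≤ (T ∩ G.neighborFinset v).card) :
    ∀ k, 3 ≤ k → k + 2 ≤ Fintype.card V →
      ∃ A : Finset V, T ⊆ A ∧ A.card = k ∧ (∀ v ∈ A, 2 ≤ (A ∩ G.neighborFinset v).card) ∧
        6 + 2 * ∑ v ∈ A \ T, G.degree v ≤ WW G A + 4 * (A \ T).card := by
  intro k hk
  induction k, hk using Nat.le_induction with
  | base =>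
    intro _
    refine ⟨T, Finset.Subset.refl T, hT3, hTmind, ?_⟩
    have h6 : 6 ≤ WW G T := by
      have := Finset.card_nsmul_le_sum T (fun v => (T ∩ G.neighborFinset v).card) 2 hTmind
      rw [hT3] at this
      simpa [WW] using this
    simp [Finset.sdiff_self]
    omega
  | succ k hk IH =>
    intro hkn
    obtain ⟨A, hTA, hcard, hmind, hinv⟩ := IH (by omega)
    have hAne : A ≠ univ := by
      intro h
      rw [h, Finset.card_univ] at hcard
      omega
    have hAnonempty : A.Nonempty := Finset.card_pos.mp (by omega)
    obtain ⟨w, hwA, hwle⟩ := grow G hstar A hAnonempty hmind hAne hdeg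
    have hwT : w ∉ T := fun h => hwA (hTA h)
    refine ⟨insert w A, hTA.trans (Finset.subset_insert w A), ?_, ?_, ?_⟩
    · rw [Finset.card_insert_of_notMem hwA, hcard]
    · intro v hv
      have hmono : (A ∩ G.neighborFinset v).card ≤ ((insert w A) ∩ G.neighborFinset v).card :=
        Finset.card_le_card (Finset.inter_subset_inter (Finset.subset_insert w A) (Finset.Subset.refl _))
      rcases Finset.mem_insert.mp hv with rfl | hvA
      · have := hdeg v
        omega
      · have := hmind v hvA
        omega
    · have hW : WW G (insert w A) = WW G A + 2 * (A ∩ G.neighborFinset w).card :=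
        WW_insert G hwA
      have hsd : insert w A \ T = insert w (A \ T) := by
        rw [Finset.insert_sdiff_of_notMem _ hwT]
      have hwAT : w ∉ A \ T := fun h => hwA (Finset.mem_sdiff.mp h).1
      rw [hsd, Finset.sum_insert hwAT, Finset.card_insert_of_notMem hwAT, hW]
      have := hdeg w
      omega

end Aux2

section Aux3

variable {V : Type*} [Fintype V] (G : SimpleGraph V)

lemma partition_of_star (hdeg : ∀ v : V, 5 ≤ (G.neighborSet v).ncard) (h : StarProp G) :
    HasMinDegPartition G 2 3 := by
  obtain ⟨A, S, hAne, hSne, hdisj, hA2, hS3⟩ := h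
  set 𝒮 : Set (Set V) :=
    {S' | S' ∩ A = ∅ ∧ ∀ v ∈ S', 3 ≤ (S' ∩ G.neighborSet v).ncard} with h𝒮
  set B : Set V := ⋃₀ 𝒮 with hB
  have hSmem : S ∈ 𝒮 := by
    constructor
    · rw [Set.inter_comm]
      exact Set.disjoint_iff_inter_eq_empty.mp hdisj
    · exact hS3
  have hsubB : ∀ S' ∈ 𝒮, S' ⊆ B := fun S' h x hx => ⟨S', h, hx⟩
  have hBA : B ∩ A = ∅ := by
    ext u
    simp only [Set.mem_inter_iff, Set.mem_empty_iff_false, iff_false, not_and]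
    rintro ⟨S', hS', huS'⟩ huA
    have := hS'.1
    rw [Set.eq_empty_iff_forall_notMem] at this
    exact this u ⟨huS', huA⟩
  have hAcompl : A ⊆ Bᶜ := by
    intro a ha hb
    rw [Set.eq_empty_iff_forall_notMem] at hBA
    exact hBA a ⟨hb, ha⟩
  have hBmind : ∀ v ∈ B, 3 ≤ (B ∩ G.neighborSet v).ncard := by
    rintro v ⟨S', hS', hvS'⟩
    calc 3 ≤ (S' ∩ G.neighborSet v).ncard := hS'.2 v hvS'
      _ ≤ (B ∩ G.neighborSet v).ncard :=
        Set.ncard_le_ncard (Set.inter_subset_inter_left _ (hsubB S' hS')) (Set.toFinite _)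
  refine ⟨Bᶜ, B, ⟨hAne.choose, hAcompl hAne.choose_spec⟩, ⟨hSne.choose, hsubB S hSmem hSne.choose_spec⟩,
    disjoint_compl_left, by simp, ?_, hBmind⟩
  intro v hv
  by_cases hvA : v ∈ A
  · calc 2 ≤ (A ∩ G.neighborSet v).ncard := hA2 v hvA
      _ ≤ (Bᶜ ∩ G.neighborSet v).ncard :=
        Set.ncard_le_ncard (Set.inter_subset_inter_left _ hAcompl) (Set.toFinite _)
  · by_contra hlt
    push_neg at hlt
    have hBig : 3 ≤ (B ∩ G.neighborSet v).ncard := by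
      have hsplit : (G.neighborSet v ∩ B).ncard + (G.neighborSet v \ B).ncard
          = (G.neighborSet v).ncard :=
        Set.ncard_inter_add_ncard_diff_eq_ncard _ _ (Set.toFinite _)
      have h1 : (G.neighborSet v \ B).ncard ≤ 1 := by
        have hsub : G.neighborSet v \ B ⊆ Bᶜ ∩ G.neighborSet v := by
          intro u hu
          exact ⟨hu.2, hu.1⟩
        have := Set.ncard_le_ncard hsub (Set.toFinite _)
        omega
      have := hdeg v
      rw [Set.inter_comm]
      omega
    have hmem : insert v B ∈ 𝒮 := by
      constructor
      · ext u
        simp only [Set.mem_inter_iff, Set.mem_insert_iff, Set.mem_empty_iff_false, iff_false,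
          not_and]
        rintro (rfl | huB) huA
        · exact hvA huA
        · rw [Set.eq_empty_iff_forall_notMem] at hBA
          exact hBA u ⟨huB, huA⟩
      · intro u hu
        rcases hu with rfl | huB
        · calc 3 ≤ (B ∩ G.neighborSet u).ncard := hBig
            _ ≤ (insert u B ∩ G.neighborSet u).ncard :=
              Set.ncard_le_ncard (Set.inter_subset_inter_left _ (Set.subset_insert u B))
                (Set.toFinite _)
        · obtain ⟨S', hS', huS'⟩ := huB
          calc 3 ≤ (S' ∩ G.neighborSet u).ncard := hS'.2 u huS'
            _ ≤ (insert v B ∩ G.neighborSet u).ncard :=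
              Set.ncard_le_ncard (Set.inter_subset_inter_left _
                ((hsubB S' hS').trans (Set.subset_insert v B))) (Set.toFinite _)
    exact hv ⟨insert v B, hmem, Set.mem_insert v B⟩

end Aux3

/-- Every finite graph with minimum degree at least 5 that contains a triangle and is
not isomorphic to `K₆` has a `(δ ≥ 2, δ ≥ 3)`-partition. -/
theorem mindeg5_triangle_not_K6 {V : Type*} [Fintype V] [Nonempty V] (G : SimpleGraph V)
    (hdeg : ∀ v : V, 5 ≤ (G.neighborSet v).ncard)
    (htri : ∃ a b c : V, G.Adj a b ∧ G.Adj b c ∧ G.Adj c a)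
    (hnotK6 : ¬ Nonempty (G ≃g (⊤ : SimpleGraph (Fin 6)))) :
    HasMinDegPartition G 2 3 := by
  classical
  have hdeg' : ∀ v : V, 5 ≤ G.degree v := by
    intro v
    have hv := hdeg v
    rwa [Set.ncard_eq_toFinset_card', ← SimpleGraph.neighborFinset_def] at hv
  have hnbrsub : ∀ v : V, G.neighborFinset v ⊆ univ.erase v := by
    intro v u hu
    rw [Finset.mem_erase]
    exact ⟨((SimpleGraph.mem_neighborFinset G v u).mp hu).ne', Finset.mem_univ u⟩
  have hn6 : 6 ≤ Fintype.card V := by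
    obtain ⟨v⟩ := ‹Nonempty V›
    have h1 : G.degree v ≤ (univ.erase v).card := Finset.card_le_card (hnbrsub v)
    rw [Finset.card_erase_of_mem (Finset.mem_univ v), Finset.card_univ] at h1
    have := hdeg' v
    omega
  have hn7 : 7 ≤ Fintype.card V := by
    rcases Nat.lt_or_ge (Fintype.card V) 7 with h7 | h7
    · exfalso
      have h6 : Fintype.card V = 6 := by omega
      have hcomplete : ∀ u w : V, u ≠ w → G.Adj u w := by
        intro u w huw
        have heq : G.neighborFinset u = univ.erase u := by
          apply Finset.eq_of_subset_of_card_le (hnbrsub u)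
          rw [Finset.card_erase_of_mem (Finset.mem_univ u), Finset.card_univ, h6]
          exact hdeg' u
        have : w ∈ G.neighborFinset u := by
          rw [heq, Finset.mem_erase]
          exact ⟨huw.symm, Finset.mem_univ w⟩
        exact (SimpleGraph.mem_neighborFinset G u w).mp this
      refine hnotK6 ⟨⟨Fintype.equivFinOfCardEq h6, ?_⟩⟩
      intro a b
      simp only [SimpleGraph.top_adj, ne_eq, EmbeddingLike.apply_eq_iff_eq]
      constructor
      · intro h
        exact hcomplete a b h
      · intro h
        exact h.ne
    · exact h7
  by_cases hstar : StarProp G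
  · exact partition_of_star G hdeg hstar
  · exfalso
    obtain ⟨a, b, c, hab, hbc, hca⟩ := htri
    obtain ⟨w1, hw1m, hw1d, hw1a, hw1b, hw1c⟩ := bad_vertex G hstar hdeg' hn7 hab hbc hca
    obtain ⟨w2, hw2m, hw2d, hw2a, hw2b, hw2w1⟩ :=
      bad_vertex G hstar hdeg' hn7 hab hw1b.symm hw1a
    obtain ⟨w3, hw3m, hw3d, hw3a, hw3w1, hw3w2⟩ :=
      bad_vertex G hstar hdeg' hn7 hw1a.symm hw2w1.symm hw2a
    -- the triangle w1 w2 w3 with all degrees 5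
    have h12 : G.Adj w1 w2 := hw2w1.symm
    have h23 : G.Adj w2 w3 := hw3w2.symm
    have h31 : G.Adj w3 w1 := hw3w1
    set T : Finset V := {w1, w2, w3} with hTdef
    have hne12 : w1 ≠ w2 := h12.ne
    have hne23 : w2 ≠ w3 := h23.ne
    have hne31 : w3 ≠ w1 := h31.ne
    have hT3 : T.card = 3 := by
      rw [hTdef, Finset.card_insert_of_notMem (by simp [hne12, hne31.symm]),
        Finset.card_insert_of_notMem (by simp [hne23])]
      simp
    have hTmind : ∀ v ∈ T, 2 ≤ (T ∩ G.neighborFinset v).card := by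
      intro v hv
      have hsub : ∀ x y : V, x ≠ y → x ∈ T → y ∈ T → G.Adj v x → G.Adj v y →
          2 ≤ (T ∩ G.neighborFinset v).card := by
        intro x y hxy hxA hyA hvx hvy
        have hss : ({x, y} : Finset V) ⊆ T ∩ G.neighborFinset v := by
          intro u hu
          simp only [Finset.mem_insert, Finset.mem_singleton] at hu
          rcases hu with rfl | rfl <;>
            simp [Finset.mem_inter, hxA, hyA, SimpleGraph.mem_neighborFinset, hvx, hvy]
        calc 2 = ({x, y} : Finset V).card := by
              rw [Finset.card_insert_of_notMem (by simp [hxy]), Finset.card_singleton]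
          _ ≤ _ := Finset.card_le_card hss
      rw [hTdef] at hv
      simp only [Finset.mem_insert, Finset.mem_singleton] at hv
      rcases hv with rfl | rfl | rfl
      · exact hsub w2 w3 hne23 (by simp [hTdef]) (by simp [hTdef]) h12 h31.symm
      · exact hsub w1 w3 hne31.symm (by simp [hTdef]) (by simp [hTdef]) h12.symm h23
      · exact hsub w1 w2 hne12 (by simp [hTdef]) (by simp [hTdef]) h31 h23.symm
    obtain ⟨A, hTA, hcardA, hmind, hinv⟩ :=
      reach G hdeg' hstar T hT3 hTmind (Fintype.card V - 2) (by omega) (by omega)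
    have hcompl2 : (Aᶜ : Finset V).card = 2 := by
      rw [Finset.card_compl, hcardA]
      omega
    obtain ⟨x, y, hxy, hc⟩ := Finset.card_eq_two.mp hcompl2
    have hx : x ∉ A := by
      have : x ∈ (Aᶜ : Finset V) := by rw [hc]; simp
      simpa using this
    have hy : y ∉ A := by
      have : y ∈ (Aᶜ : Finset V) := by rw [hc]; simp
      simpa using this
    have hyix : y ∉ insert x A := by simp [hxy.symm, hy]
    have huniv : insert y (insert x A) = univ := by
      apply Finset.eq_univ_iff_forall.mpr
      intro v
      by_cases hvA : v ∈ A
      · simp [hvA]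
      · have : v ∈ (Aᶜ : Finset V) := by simpa using hvA
        rw [hc] at this
        simp only [Finset.mem_insert, Finset.mem_singleton] at this
        rcases this with rfl | rfl <;> simp
    set t : ℕ := if G.Adj y x then 1 else 0 with htdef
    have ht1 : t ≤ 1 := by
      rw [htdef]; split <;> omega
    have hins : ((insert x A) ∩ G.neighborFinset y).card = (A ∩ G.neighborFinset y).card + t := by
      by_cases hadj : G.Adj y x
      · rw [Finset.insert_inter_of_mem (by simpa [SimpleGraph.mem_neighborFinset] using hadj),
          Finset.card_insert_of_notMem (by simp [hx]), htdef]
        simp [hadj]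
      · rw [Finset.insert_inter_of_notMem (by simpa [SimpleGraph.mem_neighborFinset] using hadj),
          htdef]
        simp [hadj]
    have e1 : WW G univ = WW G A + 2 * (A ∩ G.neighborFinset x).card
        + 2 * ((A ∩ G.neighborFinset y).card + t) := by
      rw [← huniv, WW_insert G hyix, WW_insert G hx, hins]
    have e2 : WW G univ = ∑ v, G.degree v := WW_univ G
    have hTsum : ∑ v ∈ T, G.degree v = 15 := by
      rw [hTdef, Finset.sum_insert (by simp [hne12, hne31.symm]),
        Finset.sum_insert (by simp [hne23]), Finset.sum_singleton, hw1d, hw2d, hw3d]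
      norm_num
    have hAsum : ∑ v ∈ A \ T, G.degree v + ∑ v ∈ T, G.degree v = ∑ v ∈ A, G.degree v :=
      Finset.sum_sdiff hTA
    have hDsum : ∑ v, G.degree v
        = G.degree y + (G.degree x + ∑ v ∈ A, G.degree v) := by
      rw [← huniv, Finset.sum_insert hyix, Finset.sum_insert hx]
    -- bound degrees of x and y
    have houtx : ∀ z : V, z ∉ A → G.neighborFinset z \ A ⊆ {x, y} := by
      intro z hz u hu
      rw [Finset.mem_sdiff] at hu
      have : u ∈ (Aᶜ : Finset V) := by simpa using hu.2
      rw [hc] at this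
      exact this
    have hdx : G.degree x ≤ (A ∩ G.neighborFinset x).card + t := by
      have hsplit : (G.neighborFinset x ∩ A).card + (G.neighborFinset x \ A).card
          = (G.neighborFinset x).card := Finset.card_inter_add_card_sdiff _ _
      have hsd : (G.neighborFinset x \ A).card ≤ t := by
        by_cases hadj : G.Adj y x
        · have hss : G.neighborFinset x \ A ⊆ {y} := by
            intro u hu
            have h1 := houtx x hx hu
            rw [Finset.mem_sdiff] at hu
            simp only [Finset.mem_insert, Finset.mem_singleton] at h1
            rcases h1 with rfl | rfl
            · exact absurd hu.1 (SimpleGraph.notMem_neighborFinset_self G u)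
            · simp
          have := Finset.card_le_card hss
          simp only [Finset.card_singleton] at this
          rw [htdef]
          simp [hadj]
          omega
        · have hss : G.neighborFinset x \ A ⊆ ∅ := by
            intro u hu
            have h1 := houtx x hx hu
            rw [Finset.mem_sdiff] at hu
            simp only [Finset.mem_insert, Finset.mem_singleton] at h1
            rcases h1 with rfl | rfl
            · exact absurd hu.1 (SimpleGraph.notMem_neighborFinset_self G u)
            · exact absurd ((SimpleGraph.mem_neighborFinset G x u).mp hu.1).symm hadj
          have := Finset.card_le_card hss
          simp only [Finset.card_empty] at this
          omega
      have hdeq : (G.neighborFinset x).card = G.degree x := rfl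
      rw [Finset.inter_comm] at hsplit
      omega
    have hdy : G.degree y ≤ (A ∩ G.neighborFinset y).card + t := by
      have hsplit : (G.neighborFinset y ∩ A).card + (G.neighborFinset y \ A).card
          = (G.neighborFinset y).card := Finset.card_inter_add_card_sdiff _ _
      have hsd : (G.neighborFinset y \ A).card ≤ t := by
        by_cases hadj : G.Adj y x
        · have hss : G.neighborFinset y \ A ⊆ {x} := by
            intro u hu
            have h1 := houtx y hy hu
            rw [Finset.mem_sdiff] at hu
            simp only [Finset.mem_insert, Finset.mem_singleton] at h1
            rcases h1 with rfl | rfl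
            · simp
            · exact absurd hu.1 (SimpleGraph.notMem_neighborFinset_self G u)
          have := Finset.card_le_card hss
          simp only [Finset.card_singleton] at this
          rw [htdef]
          simp [hadj]
          omega
        · have hss : G.neighborFinset y \ A ⊆ ∅ := by
            intro u hu
            have h1 := houtx y hy hu
            rw [Finset.mem_sdiff] at hu
            simp only [Finset.mem_insert, Finset.mem_singleton] at h1
            rcases h1 with rfl | rfl
            · exact absurd ((SimpleGraph.mem_neighborFinset G y u).mp hu.1) hadj
            · exact absurd hu.1 (SimpleGraph.notMem_neighborFinset_self G u)
          have := Finset.card_le_card hss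
          simp only [Finset.card_empty] at this
          omega
      have hdeq : (G.neighborFinset y).card = G.degree y := rfl
      rw [Finset.inter_comm] at hsplit
      omega
    have hcardAT : (A \ T).card = A.card - T.card := Finset.card_sdiff_of_subset hTA
    have hdeg5n : 5 * Fintype.card V ≤ ∑ v, G.degree v := by
      have hall : ∀ v ∈ (univ : Finset V), 5 ≤ G.degree v := fun v _ => hdeg' v
      have h := Finset.card_nsmul_le_sum univ (fun v => G.degree v) 5 hall
      rw [Finset.card_univ, smul_eq_mul] at h
      omega
    omega
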